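/- Let (W,S) be a Coxeter system with length l, Bruhat order ≤, and s ∈ S. Suppose x, y, v, w ∈ W satisfy: (1) xy = vw with l(xy) = l(x) + l(y) = l(v) + l(w); (2) w < sw and v < vs; (3) y ≤ sw. Then y ≤ w. -/

import Mathlib

open LaurentPolynomial Polynomial

noncomputable section

namespace WGI

/-- The ring `A = ℤ[q,q⁻¹]` of Laurent polynomials. -/
abbrev A : Type := LaurentPolynomial ℤ

/-- The indeterminate `q`. -/
def Q : A := LaurentPolynomial.T 1

/-- The element `q⁻¹`. -/
def Qi : A := LaurentPolynomial.T (-1)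

variable {B W : Type} [Group W] {M : CoxeterMatrix B} (cs : CoxeterSystem M W)

/-- One step of the relation generating the Bruhat order: `w = tu` for a reflection `t`
(or `t = 1`) and `l(u) ≤ l(w)`. -/
def BStep (u w : W) : Prop :=
  cs.length u ≤ cs.length w ∧ ∃ t : W, (cs.IsReflection t ∨ t = 1) ∧ w = t * u

/-- The Bruhat order on `W`: the transitive (and reflexive) closure of `BStep`. -/
def BrLe (u w : W) : Prop := Relation.ReflTransGen (BStep cs) u w

/-- Strict Bruhat order. -/
def BrLt (u w : W) : Prop := BrLe cs u w ∧ u ≠ w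

/-- The left weak order: `u ≤_L w` iff `l(wu⁻¹) = l(w) - l(u)`, i.e. `u` is a suffix of `w`. -/
def WkLe (u w : W) : Prop := cs.length (w * u⁻¹) + cs.length u = cs.length w

/-- Strict left weak order. -/
def WkLt (u w : W) : Prop := WkLe cs u w ∧ u ≠ w

/-- An ideal of `(W, ≤_L)`: a subset closed under taking suffixes. -/
def IsIdealWk (I : Set W) : Prop := ∀ u w : W, WkLe cs u w → w ∈ I → u ∈ I

/-- The set `D_J` of minimal left coset representatives of `W_J`. -/
def DD (J : Set B) : Set W := { w | ∀ j ∈ J, cs.length w < cs.length (w * cs.simple j) }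

/-- Strong ascent: `sw > w` and `sw ∈ I`. -/
def SA (I : Set W) (s : B) (w : W) : Prop :=
  cs.length w < cs.length (cs.simple s * w) ∧ cs.simple s * w ∈ I

/-- Strong descent: `sw < w`. -/
def SD (s : B) (w : W) : Prop := cs.length (cs.simple s * w) < cs.length w

/-- Weak ascent: `sw > w` and `sw ∈ D_J \ I`. -/
def WA (I : Set W) (J : Set B) (s : B) (w : W) : Prop :=
  cs.length w < cs.length (cs.simple s * w) ∧ cs.simple s * w ∈ DD cs J \ I

/-- Weak descent: `sw > w` and `sw ∉ D_J`. -/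
def WD (J : Set B) (s : B) (w : W) : Prop :=
  cs.length w < cs.length (cs.simple s * w) ∧ cs.simple s * w ∉ DD cs J

/-- Descents: strong or weak. -/
def Desc (J : Set B) (s : B) (w : W) : Prop := SD cs s w ∨ WD cs J s w

/-- Ascents: strong or weak. -/
def Asc (I : Set W) (J : Set B) (s : B) (w : W) : Prop := SA cs I s w ∨ WA cs I J s w

/-- The data making the ideal `I` (of the left weak order, contained in `D_J`) a
`W`-graph ideal with respect to `J`: an `H(W)`-module (a module together with operators
`T s` satisfying the quadratic and braid relations of the Hecke algebra) which is free
over `A` with basis indexed by `I`, on which the generators act by the four-case formula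
of Definition 5.2, together with a compatible semilinear bar involution fixing `b₁`. -/
structure WGModule (I : Set W) (J : Set B) where
  V : Type
  [acg : AddCommGroup V]
  [mod : Module A V]
  ideal : IsIdealWk cs I
  subset : I ⊆ DD cs J
  one_mem : (1 : W) ∈ I
  bas : Module.Basis I A V
  T : B → V →ₗ[A] V
  quad : ∀ s : B, (T s) ∘ₗ (T s) = LinearMap.id + (Q - Qi) • T s
  braid : ∀ s t : B,
    ((CoxeterSystem.alternatingWord s t (M s t)).map fun i => (T i : Module.End A V)).prod =
    ((CoxeterSystem.alternatingWord t s (M s t)).map fun i => (T i : Module.End A V)).prod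
  /-- the polynomials `r^s_{y,w}` (divided by `q`, as elements of `ℤ[q]` with zero constant
  term they are recorded in `qℤ[q]` via `r_const`); `r s w y` is `r^s_{y,w}`. -/
  r : B → I → (I →₀ Polynomial ℤ)
  r_const : ∀ (s : B) (w y : I), ((r s w) y).coeff 0 = 0
  r_supp : ∀ (s : B) (w y : I), (r s w) y ≠ 0 → BrLt cs (y : W) (cs.simple s * (w : W))
  act_SA : ∀ (s : B) (w : I) (h : SA cs I s (w : W)),
    T s (bas w) = bas ⟨cs.simple s * (w : W), h.2⟩
  act_SD : ∀ (s : B) (w : I), SD cs s (w : W) → ∀ h' : cs.simple s * (w : W) ∈ I,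
    T s (bas w) = bas ⟨cs.simple s * (w : W), h'⟩ + (Q - Qi) • bas w
  act_WD : ∀ (s : B) (w : I), WD cs J s (w : W) → T s (bas w) = -Qi • bas w
  act_WA : ∀ (s : B) (w : I), WA cs I J s (w : W) →
    T s (bas w) = Q • bas w - (r s w).sum fun y p => (Polynomial.toLaurent p) • bas y
  bar : V → V
  bar_add : ∀ x y : V, bar (x + y) = bar x + bar y
  bar_smul : ∀ (a : A) (x : V), bar (a • x) = (LaurentPolynomial.invert a) • bar x
  bar_one : bar (bas ⟨(1 : W), one_mem⟩) = bas ⟨(1 : W), one_mem⟩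
  bar_T : ∀ (s : B) (x : V), bar (T s x) = T s (bar x) - (Q - Qi) • bar x

attribute [instance] WGModule.acg WGModule.mod

/-- `I` is a `W`-graph ideal with respect to `J`. -/
def IsWGraphIdeal (I : Set W) (J : Set B) : Prop := Nonempty (WGModule cs I J)


open scoped Classical


section SignRep

open List

private lemma conj_simple_eq_simple_iff (i : B) (z : W) :
    cs.simple i * z * cs.simple i = cs.simple i ↔ z = cs.simple i := by
  constructor
  · intro h
    have h2 := congrArg (fun y => cs.simple i * y * cs.simple i) h
    simpa [mul_assoc, cs.simple_mul_simple_cancel_left,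
      cs.simple_mul_simple_cancel_right, cs.simple_mul_simple_self] using h2
  · rintro rfl
    calc cs.simple i * cs.simple i * cs.simple i = 1 * cs.simple i := by
          rw [cs.simple_mul_simple_self]
      _ = cs.simple i := one_mul _

private lemma conj_eq_iff' (g x y : W) : g * x * g⁻¹ = y ↔ x = g⁻¹ * y * g := by
  constructor
  · rintro rfl; group
  · rintro rfl; group

private lemma dih3 {G : Type} [Group G] (a b z : G) (hb : b * b = 1) :
    b * z * b = a ↔ z = b * a * b := by
  constructor
  · rintro rfl
    have : b * (b * z * b) * b = (b * b) * z * (b * b) := by group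
    rw [this, hb, one_mul, mul_one]
  · rintro rfl
    have : b * (b * a * b) * b = (b * b) * a * (b * b) := by group
    rw [this, hb, one_mul, mul_one]

private lemma dih4 {G : Type} [Group G] (a b : G) (ha : a * a = 1) (hb : b * b = 1) :
    (a * b)⁻¹ * a = a * (a * b) := by
  have hai : a⁻¹ = a := by
    rw [inv_eq_iff_mul_eq_one, ha]
  have hbi : b⁻¹ = b := by
    rw [inv_eq_iff_mul_eq_one, hb]
  rw [mul_inv_rev, hai, hbi, mul_assoc, ha, mul_one, ← mul_assoc, ha, one_mul]

private lemma dih5 {G : Type} [Group G] (a b z : G) (ha : a * a = 1) (hb : b * b = 1) (l : ℕ) :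
    (a * b) * z * (a * b)⁻¹ = a * (a * b) ^ (l + 1) ↔ z = a * (a * b) ^ (l + 3) := by
  rw [conj_eq_iff']
  have key : (a * b)⁻¹ * (a * (a * b) ^ (l + 1)) * (a * b)
      = ((a * b)⁻¹ * a) * (a * b) ^ (l + 2) := by
    rw [pow_succ (a * b) (l + 1)]
    simp [mul_assoc]
  rw [key, dih4 a b ha hb, mul_assoc, ← pow_succ']

/-- The sign permutation attached to a simple reflection. -/
noncomputable def brP (i : B) : Equiv.Perm (W × ℤˣ) :=
  Function.Involutive.toPerm
    (fun p => (cs.simple i * p.1 * cs.simple i, if p.1 = cs.simple i then -p.2 else p.2))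
    (by
      rintro ⟨t, ε⟩
      dsimp only
      rw [if_congr (conj_simple_eq_simple_iff cs i t) rfl rfl]
      by_cases h : t = cs.simple i <;>
        simp [h, mul_assoc, cs.simple_mul_simple_cancel_left,
          cs.simple_mul_simple_cancel_right])

@[simp] lemma brP_apply (i : B) (p : W × ℤˣ) :
    brP cs i p = (cs.simple i * p.1 * cs.simple i, if p.1 = cs.simple i then -p.2 else p.2) :=
  rfl

private lemma brP_pow_apply (i j : B) (k : ℕ) (p : W × ℤˣ) :
    ((brP cs i * brP cs j) ^ k) p =
      ((cs.simple i * cs.simple j) ^ k * p.1 * ((cs.simple i * cs.simple j) ^ k)⁻¹,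
        p.2 * ∏ l ∈ Finset.range (2 * k),
          (if p.1 = cs.simple i * (cs.simple i * cs.simple j) ^ (l + 1) then (-1 : ℤˣ) else 1)) := by
  have ha : cs.simple i * cs.simple i = 1 := cs.simple_mul_simple_self i
  have hb : cs.simple j * cs.simple j = 1 := cs.simple_mul_simple_self j
  induction k generalizing p with
  | zero => simp
  | succ k ih =>
    have e1 : cs.simple i * (cs.simple i * cs.simple j) ^ 1 = cs.simple j := by
      rw [pow_one, ← mul_assoc, ha, one_mul]
    have e2 : cs.simple i * (cs.simple i * cs.simple j) ^ 2
        = cs.simple j * cs.simple i * cs.simple j := by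
      rw [sq]
      simp [mul_assoc, cs.simple_mul_simple_cancel_left]
    have hq : (brP cs i * brP cs j) p =
        ((cs.simple i * cs.simple j) * p.1 * (cs.simple i * cs.simple j)⁻¹,
          p.2 * (if p.1 = cs.simple i * (cs.simple i * cs.simple j) ^ 1 then (-1:ℤˣ) else 1)
              * (if p.1 = cs.simple i * (cs.simple i * cs.simple j) ^ 2 then (-1:ℤˣ) else 1)) := by
      rw [e1, e2]
      show brP cs i (brP cs j p) = _
      rw [brP_apply, brP_apply]
      dsimp only
      congr 1
      · rw [mul_inv_rev, cs.inv_simple, cs.inv_simple]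
        group
      · rw [if_congr (dih3 (cs.simple i) (cs.simple j) p.1 hb) rfl rfl]
        by_cases h1 : p.1 = cs.simple j <;>
          by_cases h2 : p.1 = cs.simple j * cs.simple i * cs.simple j <;>
          simp [h1, h2]
    rw [pow_succ, Equiv.Perm.mul_apply, ih ((brP cs i * brP cs j) p), hq]
    dsimp only
    congr 1
    · rw [pow_succ (cs.simple i * cs.simple j) k, mul_inv_rev]
      group
    · have hprodeq : ∏ l ∈ Finset.range (2 * k),
            (if (cs.simple i * cs.simple j) * p.1 * (cs.simple i * cs.simple j)⁻¹
                = cs.simple i * (cs.simple i * cs.simple j) ^ (l+1) then (-1:ℤˣ) else 1)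
          = ∏ l ∈ Finset.range (2 * k),
            (if p.1 = cs.simple i * (cs.simple i * cs.simple j) ^ (l+3) then (-1:ℤˣ) else 1) := by
        apply Finset.prod_congr rfl
        intro l _
        rw [if_congr (dih5 (cs.simple i) (cs.simple j) p.1 ha hb l) rfl rfl]
      rw [hprodeq]
      have h2k : 2 * (k + 1) = 2 + 2 * k := by ring
      rw [h2k, Finset.prod_range_add]
      have h2 : ∏ l ∈ Finset.range 2,
            (if p.1 = cs.simple i * (cs.simple i * cs.simple j) ^ (l+1) then (-1:ℤˣ) else 1)
          = (if p.1 = cs.simple i * (cs.simple i * cs.simple j) ^ 1 then (-1:ℤˣ) else 1)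
            * (if p.1 = cs.simple i * (cs.simple i * cs.simple j) ^ 2 then (-1:ℤˣ) else 1) := by
        rw [Finset.prod_range_succ, Finset.prod_range_one]
      rw [h2]
      have h4 : ∏ l ∈ Finset.range (2*k),
            (if p.1 = cs.simple i * (cs.simple i * cs.simple j) ^ (2+l+1) then (-1:ℤˣ) else 1)
          = ∏ l ∈ Finset.range (2*k),
            (if p.1 = cs.simple i * (cs.simple i * cs.simple j) ^ (l+3) then (-1:ℤˣ) else 1) := by
        apply Finset.prod_congr rfl
        intro l _
        have : 2 + l + 1 = l + 3 := by ring
        rw [this]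
      rw [h4]
      group

private lemma brP_liftable : M.IsLiftable (fun i => brP cs i) := by
  intro i j
  apply Equiv.ext
  rintro ⟨t, ε⟩
  rw [brP_pow_apply cs i j (M i j) (t, ε)]
  have hrel : (cs.simple i * cs.simple j) ^ (M i j) = 1 := cs.simple_mul_simple_pow i j
  rw [hrel]
  have hprod : ∏ l ∈ Finset.range (2 * M i j),
      (if t = cs.simple i * (cs.simple i * cs.simple j) ^ (l + 1) then (-1:ℤˣ) else 1) = 1 := by
    have h2m : 2 * M i j = M i j + M i j := by ring
    rw [h2m, Finset.prod_range_add]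
    have hcongr : ∀ l ∈ Finset.range (M i j),
        (if t = cs.simple i * (cs.simple i * cs.simple j) ^ (M i j + l + 1) then (-1:ℤˣ) else 1)
        = (if t = cs.simple i * (cs.simple i * cs.simple j) ^ (l + 1) then (-1:ℤˣ) else 1) := by
      intro l _
      have : (cs.simple i * cs.simple j) ^ (M i j + l + 1)
          = (cs.simple i * cs.simple j) ^ (l + 1) := by
        rw [show M i j + l + 1 = M i j + (l+1) by ring, pow_add, hrel, one_mul]
      rw [this]
    rw [Finset.prod_congr rfl hcongr, ← Finset.prod_mul_distrib]
    have hsq : ∀ l ∈ Finset.range (M i j),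
        (if t = cs.simple i * (cs.simple i * cs.simple j) ^ (l + 1) then (-1:ℤˣ) else 1)
        * (if t = cs.simple i * (cs.simple i * cs.simple j) ^ (l + 1) then (-1:ℤˣ) else 1) = 1 := by
      intro l _
      by_cases h : t = cs.simple i * (cs.simple i * cs.simple j) ^ (l + 1) <;> simp [h]
    rw [Finset.prod_congr rfl hsq, Finset.prod_const_one]
  rw [hprod]
  simp

/-- The sign homomorphism `W →* Perm (W × ℤˣ)`. -/
noncomputable def brHom : W →* Equiv.Perm (W × ℤˣ) :=
  cs.lift ⟨fun i => brP cs i, brP_liftable cs⟩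

@[simp] lemma brHom_simple (i : B) : brHom cs (cs.simple i) = brP cs i :=
  cs.lift_apply_simple (brP_liftable cs) i

lemma brHom_wordProd (ω : List B) (t : W) (ε : ℤˣ) :
    brHom cs (cs.wordProd ω) (t, ε) =
      (cs.wordProd ω * t * (cs.wordProd ω)⁻¹,
        ε * (-1) ^ ((cs.rightInvSeq ω).count t)) := by
  induction ω generalizing ε with
  | nil => simp
  | cons i ω ih =>
    rw [cs.wordProd_cons, map_mul, Equiv.Perm.mul_apply, ih, brHom_simple, brP_apply]
    dsimp only
    have hris : cs.rightInvSeq (i :: ω) =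
        ((cs.wordProd ω)⁻¹ * cs.simple i * cs.wordProd ω) :: cs.rightInvSeq ω := rfl
    rw [hris, List.count_cons]
    have hcond : cs.wordProd ω * t * (cs.wordProd ω)⁻¹ = cs.simple i
        ↔ t = (cs.wordProd ω)⁻¹ * cs.simple i * cs.wordProd ω := conj_eq_iff' _ _ _
    rw [if_congr hcond rfl rfl]
    congr 1
    · rw [mul_inv_rev, cs.inv_simple]; group
    · by_cases h : t = (cs.wordProd ω)⁻¹ * cs.simple i * cs.wordProd ω
      · rw [if_pos h]
        simp [h, pow_succ]
      · rw [if_neg h]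
        have hbeq : ((cs.wordProd ω)⁻¹ * cs.simple i * cs.wordProd ω == t) = false := by
          rw [beq_eq_false_iff_ne]
          exact fun hc => h hc.symm
        rw [hbeq]
        simp

lemma count_parity (ω ω' : List B) (h : cs.wordProd ω = cs.wordProd ω') (t : W) :
    ((-1 : ℤˣ)) ^ ((cs.rightInvSeq ω).count t) = (-1) ^ ((cs.rightInvSeq ω').count t) := by
  have h1 := brHom_wordProd cs ω t 1
  have h2 := brHom_wordProd cs ω' t 1
  rw [h] at h1
  rw [h1] at h2
  have := congrArg Prod.snd h2
  simpa using this

end SignRep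


section StrongExchange

open List

private lemma conj_injective (a b : W) : Function.Injective (fun x : W => a * x * b) := by
  intro x y h
  dsimp only at h
  exact mul_left_cancel (mul_right_cancel h)

lemma ris_append (ω₁ ω₂ : List B) :
    cs.rightInvSeq (ω₁ ++ ω₂) =
      (cs.rightInvSeq ω₁).map (fun x => (cs.wordProd ω₂)⁻¹ * x * cs.wordProd ω₂)
        ++ cs.rightInvSeq ω₂ := by
  induction ω₁ with
  | nil => simp
  | cons i ω₁ ih =>
    show ((cs.wordProd (ω₁ ++ ω₂))⁻¹ * cs.simple i * cs.wordProd (ω₁ ++ ω₂))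
          :: cs.rightInvSeq (ω₁ ++ ω₂) = _
    rw [ih, cs.wordProd_append]
    show _ = ((cs.wordProd ω₂)⁻¹ * ((cs.wordProd ω₁)⁻¹ * cs.simple i * cs.wordProd ω₁)
          * cs.wordProd ω₂) :: _
    congr 1
    rw [mul_inv_rev]
    group

lemma lis_eq_map_ris (ω : List B) :
    cs.leftInvSeq ω =
      (cs.rightInvSeq ω).map (fun x => cs.wordProd ω * x * (cs.wordProd ω)⁻¹) := by
  induction ω with
  | nil => simp
  | cons i ω ih =>
    show (cs.simple i) :: (cs.leftInvSeq ω).map (MulAut.conj (cs.simple i)) =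
      (cs.wordProd (i :: ω) * ((cs.wordProd ω)⁻¹ * cs.simple i * cs.wordProd ω)
          * (cs.wordProd (i :: ω))⁻¹)
        :: (cs.rightInvSeq ω).map (fun x => cs.wordProd (i :: ω) * x * (cs.wordProd (i :: ω))⁻¹)
    congr 1
    · rw [cs.wordProd_cons, mul_inv_rev, cs.inv_simple]
      have : cs.simple i * cs.wordProd ω * ((cs.wordProd ω)⁻¹ * cs.simple i * cs.wordProd ω)
          * ((cs.wordProd ω)⁻¹ * cs.simple i)
          = cs.simple i * (cs.simple i * (cs.simple i)) := by group
      rw [this, cs.simple_mul_simple_cancel_left]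
    · rw [ih, List.map_map]
      apply List.map_congr_left
      intro x _
      simp only [Function.comp_apply, MulAut.conj_apply, cs.wordProd_cons, mul_inv_rev,
        cs.inv_simple]
      group

private lemma count_ris_refl_word_odd {t : W} (ht : cs.IsReflection t) :
    ∃ ω : List B, cs.wordProd ω = t ∧ (cs.rightInvSeq ω).count t % 2 = 1 := by
  obtain ⟨u, i, rfl⟩ := ht
  obtain ⟨μ, hμ⟩ := cs.wordProd_surjective u
  refine ⟨μ ++ (i :: μ.reverse), ?_, ?_⟩
  · rw [cs.wordProd_append, cs.wordProd_cons, cs.wordProd_reverse, hμ, mul_assoc]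
  · have hπrest : cs.wordProd (i :: μ.reverse) = cs.simple i * u⁻¹ := by
      rw [cs.wordProd_cons, cs.wordProd_reverse, hμ]
    rw [ris_append, List.count_append, hπrest]
    have hf : (fun x => (cs.simple i * u⁻¹)⁻¹ * x * (cs.simple i * u⁻¹)) (cs.simple i)
        = u * cs.simple i * u⁻¹ := by
      rw [mul_inv_rev, inv_inv, cs.inv_simple]
      have : u * cs.simple i * ((cs.simple i * (cs.simple i * u⁻¹)))
          = u * cs.simple i * u⁻¹ := by
        rw [cs.simple_mul_simple_cancel_left]
      rw [← this]
      group
    have hcount1 : ((cs.rightInvSeq μ).map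
          (fun x => (cs.simple i * u⁻¹)⁻¹ * x * (cs.simple i * u⁻¹))).count
          (u * cs.simple i * u⁻¹)
        = (cs.rightInvSeq μ).count (cs.simple i) := by
      rw [← hf]
      exact List.count_map_of_injective _ _ (conj_injective _ _) _
    have hris2 : cs.rightInvSeq (i :: μ.reverse) =
        ((cs.wordProd μ.reverse)⁻¹ * cs.simple i * cs.wordProd μ.reverse)
          :: cs.rightInvSeq μ.reverse := rfl
    have hhead : (cs.wordProd μ.reverse)⁻¹ * cs.simple i * cs.wordProd μ.reverse
        = u * cs.simple i * u⁻¹ := by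
      rw [cs.wordProd_reverse, hμ, inv_inv]
    have hcount2 : (cs.rightInvSeq (i :: μ.reverse)).count (u * cs.simple i * u⁻¹)
        = (cs.rightInvSeq μ).count (cs.simple i) + 1 := by
      rw [hris2, hhead, List.count_cons_self]
      congr 1
      rw [cs.rightInvSeq_reverse, List.count_reverse, lis_eq_map_ris, hμ]
      have hg : (fun x => u * x * u⁻¹) (cs.simple i) = u * cs.simple i * u⁻¹ := rfl
      rw [← hg]
      exact List.count_map_of_injective _ _ (conj_injective _ _) _
    rw [hcount1, hcount2]
    omega

lemma se_right {t w : W} (ht : cs.IsReflection t) (hlt : cs.length (w * t) < cs.length w)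
    {ω : List B} (hred : cs.IsReduced ω) (hπ : cs.wordProd ω = w) :
    t ∈ cs.rightInvSeq ω := by
  by_contra hmem
  have hc0 : (cs.rightInvSeq ω).count t = 0 := List.count_eq_zero.mpr hmem
  obtain ⟨ω', hred', hπ'⟩ := cs.exists_reduced_word' (w * t)
  obtain ⟨ωt, hπt, hodd⟩ := count_ris_refl_word_odd cs ht
  have hππ : cs.wordProd (ω' ++ ωt) = cs.wordProd ω := by
    rw [cs.wordProd_append, ← hπ', hπt, hπ, mul_assoc, ht.mul_self, mul_one]
  have hpar := count_parity cs ω (ω' ++ ωt) (by rw [hππ]) t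
  have happ : (cs.rightInvSeq (ω' ++ ωt)).count t
      = (cs.rightInvSeq ω').count t + (cs.rightInvSeq ωt).count t := by
    rw [ris_append, List.count_append]
    congr 1
    have hft : (fun x => (cs.wordProd ωt)⁻¹ * x * cs.wordProd ωt) t = t := by
      rw [hπt, ht.inv]
      dsimp only
      rw [ht.mul_self, one_mul]
    conv_lhs => rw [← hft]
    exact List.count_map_of_injective _ _ (conj_injective _ _) _
  rw [hc0, happ, pow_zero] at hpar
  have hk : ((cs.rightInvSeq ω').count t) % 2 = 1 := by
    by_contra hk
    have heven : Even ((cs.rightInvSeq ω').count t) := Nat.even_iff.mpr (by omega)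
    have hoddsum : Odd ((cs.rightInvSeq ω').count t + (cs.rightInvSeq ωt).count t) :=
      heven.add_odd (Nat.odd_iff.mpr hodd)
    rw [hoddsum.neg_one_pow] at hpar
    exact absurd hpar (by decide)
  have hmem' : t ∈ cs.rightInvSeq ω' := by
    rw [← List.count_pos_iff]
    omega
  have hinv := cs.isRightInversion_of_mem_rightInvSeq hred' hmem'
  rw [← hπ'] at hinv
  have := hinv.2
  rw [mul_assoc, ht.mul_self, mul_one] at this
  omega

lemma se_right_del {t w : W} (ht : cs.IsReflection t) (hlt : cs.length (w * t) < cs.length w)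
    {ω : List B} (hred : cs.IsReduced ω) (hπ : cs.wordProd ω = w) :
    ∃ j < ω.length, cs.wordProd (ω.eraseIdx j) = w * t := by
  have hmem := se_right cs ht hlt hred hπ
  obtain ⟨j, hj, hgete⟩ := List.mem_iff_getElem.mp hmem
  have hj' : j < ω.length := by
    have := cs.length_rightInvSeq ω
    omega
  refine ⟨j, hj', ?_⟩
  have h := cs.wordProd_mul_getD_rightInvSeq ω j
  rw [List.getD_eq_getElem _ _ hj, hgete, hπ] at h
  exact h.symm

lemma se_left_del {t w : W} (ht : cs.IsReflection t) (hlt : cs.length (t * w) < cs.length w)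
    {ω : List B} (hred : cs.IsReduced ω) (hπ : cs.wordProd ω = w) :
    ∃ j < ω.length, cs.wordProd (ω.eraseIdx j) = t * w := by
  have hmem : t ∈ cs.leftInvSeq ω := by
    have h1 : t ∈ cs.rightInvSeq ω.reverse := by
      refine se_right cs ht ?_ ((cs.isReduced_reverse_iff ω).mpr hred)
        (by rw [cs.wordProd_reverse, hπ])
      have hwt : w⁻¹ * t = (t * w)⁻¹ := by rw [mul_inv_rev, ht.inv]
      rw [hwt, cs.length_inv, cs.length_inv]
      exact hlt
    rw [cs.rightInvSeq_reverse] at h1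
    exact (List.mem_reverse).mp h1
  obtain ⟨j, hj, hgete⟩ := List.mem_iff_getElem.mp hmem
  have hj' : j < ω.length := by
    have := cs.length_leftInvSeq ω
    omega
  refine ⟨j, hj', ?_⟩
  have h := cs.getD_leftInvSeq_mul_wordProd ω j
  rw [List.getD_eq_getElem _ _ hj, hgete, hπ] at h
  exact h.symm

/-- Any word has a reduced sublist with the same product. -/
lemma reduce_word (ω : List B) :
    ∃ ω', ω'.Sublist ω ∧ cs.IsReduced ω' ∧ cs.wordProd ω' = cs.wordProd ω := by
  suffices h : ∀ (n : ℕ) (ω : List B), ω.length ≤ n →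
      ∃ ω', ω'.Sublist ω ∧ cs.IsReduced ω' ∧ cs.wordProd ω' = cs.wordProd ω from
    h ω.length ω le_rfl
  intro n
  induction n using Nat.strong_induction_on with
  | _ n ih =>
  intro ω hn
  by_cases hred : cs.IsReduced ω
  · exact ⟨ω, List.Sublist.refl ω, hred, rfl⟩
  · have hω_ne : ω ≠ [] := by
      rintro rfl
      exact hred (by simp [CoxeterSystem.IsReduced])
    have hlen_pos : 1 ≤ ω.length := by
      cases ω with
      | nil => exact absurd rfl hω_ne
      | cons a l => simp
    have hex : ∃ m, ¬ cs.IsReduced (ω.take (m+1)) := by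
      refine ⟨ω.length - 1, ?_⟩
      rw [Nat.sub_add_cancel hlen_pos, List.take_length]
      exact hred
    set k := Nat.find hex with hkdef
    have hk : ¬ cs.IsReduced (ω.take (k+1)) := Nat.find_spec hex
    have hk_le : k ≤ ω.length - 1 := Nat.find_min' hex (by
      rw [Nat.sub_add_cancel hlen_pos, List.take_length]; exact hred)
    have hk_lt : k < ω.length := by omega
    have hredk : cs.IsReduced (ω.take k) := by
      by_cases hk0 : k = 0
      · rw [hk0]
        simp [CoxeterSystem.IsReduced]
      · have hmin := Nat.find_min hex (show k - 1 < k by omega)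
        rw [not_not] at hmin
        have : k - 1 + 1 = k := by omega
        rwa [this] at hmin
    have hlen_take : (ω.take k).length = k := by
      rw [List.length_take]
      omega
    have hℓk : cs.length (cs.wordProd (ω.take k)) = k := by
      have := hredk
      rw [CoxeterSystem.IsReduced] at this
      rw [this, hlen_take]
    have hπsucc : cs.wordProd (ω.take (k+1)) = cs.wordProd (ω.take k) * cs.simple ω[k] := by
      rw [List.take_succ, List.getElem?_eq_getElem hk_lt]
      rw [cs.wordProd_append]
      simp
    have hlen_take1 : (ω.take (k+1)).length = k + 1 := by
      rw [List.length_take]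
      omega
    have hlt : cs.length (cs.wordProd (ω.take k) * cs.simple ω[k])
        < cs.length (cs.wordProd (ω.take k)) := by
      have hne : cs.length (cs.wordProd (ω.take (k+1))) ≠ k + 1 := by
        intro hcon
        exact hk (by rw [CoxeterSystem.IsReduced, hcon, hlen_take1])
      rcases cs.length_mul_simple (cs.wordProd (ω.take k)) ω[k] with hc | hc <;>
        rw [← hπsucc, hℓk] at * <;> omega
    obtain ⟨j, hj, hdel⟩ := se_right_del cs (cs.isReflection_simple ω[k]) hlt hredk rfl
    set ω₁ := (ω.take k).eraseIdx j ++ ω.drop (k+1) with hω₁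
    have hπ₁ : cs.wordProd ω₁ = cs.wordProd ω := by
      rw [hω₁, cs.wordProd_append, hdel, ← hπsucc, ← cs.wordProd_append,
        List.take_append_drop]
    have hsub₁ : ω₁.Sublist ω := by
      have h1 : ((ω.take k).eraseIdx j).Sublist (ω.take k) := List.eraseIdx_sublist _ _
      have h2 : (ω.take k).Sublist (ω.take (k+1)) := by
        rw [List.take_succ, List.getElem?_eq_getElem hk_lt]
        exact List.sublist_append_left _ _
      have h3 := (h1.trans h2).append (List.Sublist.refl (ω.drop (k+1)))
      rwa [List.take_append_drop] at h3
    have hlen₁ : ω₁.length < n := by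
      rw [hω₁, List.length_append, List.length_eraseIdx, List.length_drop]
      rw [hlen_take] at hj ⊢
      have : j < k := hj
      simp only [if_pos this]
      omega
    obtain ⟨ω', hs, hr, hp⟩ := ih ω₁.length hlen₁ ω₁ le_rfl
    exact ⟨ω', hs.trans hsub₁, hr, hp.trans hπ₁⟩

end StrongExchange


section BruhatBasic

open List Relation

lemma brLe_length_le {u w : W} (h : BrLe cs u w) : cs.length u ≤ cs.length w := by
  induction h with
  | refl => exact le_rfl
  | tail _ hstep ih => exact ih.trans hstep.1

lemma brLe_eq_of_length_eq {u w : W} (h : BrLe cs u w)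
    (hl : cs.length u = cs.length w) : u = w := by
  induction h with
  | refl => rfl
  | @tail b c hub hstep ih =>
    obtain ⟨hle, t, ht, hc⟩ := hstep
    rcases ht with htR | rfl
    · exfalso
      have h1 : cs.length u ≤ cs.length b := brLe_length_le cs hub
      have h2 : cs.length (t * b) ≠ cs.length b := htR.length_mul_right_ne b
      rw [← hc] at h2
      omega
    · rw [one_mul] at hc
      subst hc
      exact ih hl

lemma brLe_mul_simple_right {w : W} {i : B}
    (h : cs.length w ≤ cs.length (w * cs.simple i)) : BrLe cs w (w * cs.simple i) := by
  refine ReflTransGen.single ⟨h, w * cs.simple i * w⁻¹, Or.inl ⟨w, i, rfl⟩, ?_⟩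
  group

lemma brLe_mul_simple_right_down {w : W} {i : B}
    (h : cs.length (w * cs.simple i) ≤ cs.length w) : BrLe cs (w * cs.simple i) w := by
  refine ReflTransGen.single ⟨h, w * cs.simple i * w⁻¹, Or.inl ⟨w, i, rfl⟩, ?_⟩
  have : w * cs.simple i * w⁻¹ * (w * cs.simple i) = w * (cs.simple i * cs.simple i) := by
    group
  rw [this, cs.simple_mul_simple_self, mul_one]

/-- Chain implies subword: if `u ≤ w` in the Bruhat order, then for any reduced word of `w`
there is a reduced sublist whose product is `u`. -/
lemma brLe_subword {u w : W} (h : BrLe cs u w) :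
    ∀ ω : List B, cs.IsReduced ω → cs.wordProd ω = w →
      ∃ ω', ω'.Sublist ω ∧ cs.IsReduced ω' ∧ cs.wordProd ω' = u := by
  induction h with
  | refl => exact fun ω hred hπ => ⟨ω, List.Sublist.refl ω, hred, hπ⟩
  | @tail b c hub hstep ih =>
    intro ω hred hπ
    obtain ⟨hle, t, ht, hc⟩ := hstep
    rcases ht with htR | rfl
    · have hb : t * c = b := by rw [hc, ← mul_assoc, htR.mul_self, one_mul]
      have hlt : cs.length (t * c) < cs.length c := by
        have hne : cs.length (t * c) ≠ cs.length c := htR.length_mul_right_ne c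
        rw [hb]
        rw [hb] at hne
        omega
      obtain ⟨j, hj, hdel⟩ := se_left_del cs htR hlt hred hπ
      obtain ⟨ωb, hsb, hrb, hpb⟩ := reduce_word cs (ω.eraseIdx j)
      have hpb' : cs.wordProd ωb = b := by rw [hpb, hdel, hb]
      obtain ⟨ωu, h1, h2, h3⟩ := ih ωb hrb hpb'
      exact ⟨ωu, h1.trans (hsb.trans (List.eraseIdx_sublist _ j)), h2, h3⟩
    · rw [one_mul] at hc
      subst hc
      exact ih ω hred hπ

/-- Subword implies chain. -/
lemma subword_brLe :
    ∀ (n : ℕ) (ω : List B), ω.length ≤ n → cs.IsReduced ω →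
      ∀ ω' : List B, ω'.Sublist ω → BrLe cs (cs.wordProd ω') (cs.wordProd ω) := by
  intro n
  induction n using Nat.strong_induction_on with
  | _ n ihn =>
  intro ω hn hred ω' hsub
  obtain ⟨ω'', hsub'', hred'', hprod''⟩ := reduce_word cs ω'
  rw [← hprod'']
  replace hsub : ω''.Sublist ω := hsub''.trans hsub
  clear hsub'' hprod'' ω'
  rcases List.eq_nil_or_concat ω with rfl | ⟨ω₀, i, rfl⟩
  · rw [List.sublist_nil.mp hsub]
    exact Relation.ReflTransGen.refl
  · rw [List.concat_eq_append] at hsub hred hn ⊢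
    have hred₀ : cs.IsReduced ω₀ := by
      have h := CoxeterSystem.IsReduced.take hred ω₀.length
      rwa [List.take_left] at h
    have hℓ₀ : cs.length (cs.wordProd ω₀) = ω₀.length := hred₀
    have hπω : cs.wordProd (ω₀ ++ [i]) = cs.wordProd ω₀ * cs.simple i := by
      rw [cs.wordProd_append, cs.wordProd_singleton]
    have hℓω : cs.length (cs.wordProd ω₀ * cs.simple i) = ω₀.length + 1 := by
      have h := hred
      rw [CoxeterSystem.IsReduced, hπω, List.length_append] at h
      simpa using h
    have hlen₀ : ω₀.length < n := by
      rw [List.length_append] at hn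
      simp at hn
      omega
    have hup : BrLe cs (cs.wordProd ω₀) (cs.wordProd (ω₀ ++ [i])) := by
      rw [hπω]
      exact brLe_mul_simple_right cs (by omega)
    -- the "Z" lifting step, valid below level n
    have Z : ∀ a : W, BrLe cs a (cs.wordProd ω₀) →
        cs.length a < cs.length (a * cs.simple i) →
        BrLe cs (a * cs.simple i) (cs.wordProd ω₀ * cs.simple i) := by
      intro a hab
      induction hab using Relation.ReflTransGen.head_induction_on with
      | refl => intro _; exact ReflTransGen.refl
      | @head a c hstep hcb ihc =>
        intro ha
        obtain ⟨hle, t, ht, hc⟩ := hstep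
        rcases ht with htR | rfl
        · have hac_lt : cs.length a < cs.length c := by
            have := htR.length_mul_right_ne a
            rw [← hc] at this
            omega
          have has : cs.length (a * cs.simple i) = cs.length a + 1 := by
            rcases cs.length_mul_simple a i with hh | hh <;> omega
          by_cases hcs : cs.length c < cs.length (c * cs.simple i)
          · have hcs' : cs.length (c * cs.simple i) = cs.length c + 1 := by
              rcases cs.length_mul_simple c i with hh | hh <;> omega
            have hstep' : BStep cs (a * cs.simple i) (c * cs.simple i) := by
              refine ⟨by omega, t, Or.inl htR, ?_⟩
              rw [hc, mul_assoc]
            exact (ReflTransGen.single hstep').trans (ihc hcs)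
          · have hcs' : cs.length (c * cs.simple i) < cs.length c := by
              have := cs.length_mul_simple_ne c i
              omega
            -- build a reduced word of c ending in i
            obtain ⟨ω₂, hr₂, hp₂⟩ := cs.exists_reduced_word' (c * cs.simple i)
            have hπc : cs.wordProd (ω₂ ++ [i]) = c := by
              rw [cs.wordProd_append, cs.wordProd_singleton, ← hp₂,
                cs.simple_mul_simple_cancel_right]
            have hcs'' : cs.length (c * cs.simple i) + 1 = cs.length c := by
              rcases cs.length_mul_simple c i with hh | hh <;> omega
            have hlen₂ : ω₂.length + 1 = cs.length c := by
              have := hr₂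
              rw [CoxeterSystem.IsReduced, ← hp₂] at this
              omega
            have hrc : cs.IsReduced (ω₂ ++ [i]) := by
              rw [CoxeterSystem.IsReduced, hπc, List.length_append]
              simp only [List.length_singleton]
              omega
            have hac : BrLe cs a c := ReflTransGen.single ⟨hle, t, Or.inl htR, hc⟩
            obtain ⟨ωa, hsuba, hreda, hproda⟩ := brLe_subword cs hac _ hrc hπc
            rcases List.sublist_append_iff.mp hsuba with ⟨l₁, l₂, rfl, hl₁, hl₂⟩
            rcases List.sublist_singleton.mp hl₂ with rfl | rfl
            · -- ωa uses only ω₂ : good case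
              rw [List.append_nil] at hproda
              have hsub2 : (l₁ ++ [i]).Sublist (ω₂ ++ [i]) :=
                hl₁.append (List.Sublist.refl [i])
              have hπla : cs.wordProd (l₁ ++ [i]) = a * cs.simple i := by
                rw [cs.wordProd_append, cs.wordProd_singleton, hproda]
              have hℓc_lt : cs.length c < n := by
                have h1 : cs.length c ≤ cs.length (cs.wordProd ω₀) := brLe_length_le cs hcb
                omega
              have hlenω₂i : (ω₂ ++ [i]).length ≤ cs.length c := by
                rw [List.length_append]
                simp only [List.length_singleton]
                omega
              have hZ := ihn (cs.length c) hℓc_lt (ω₂ ++ [i]) hlenω₂i hrc _ hsub2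
              rw [hπla, hπc] at hZ
              -- now a * s i ≤ c ≤ b ≤ b * s i
              have hbs : BrLe cs (cs.wordProd ω₀) (cs.wordProd ω₀ * cs.simple i) :=
                brLe_mul_simple_right cs (by omega)
              exact hZ.trans (hcb.trans hbs)
            · -- ωa ends with i : impossible
              exfalso
              have hπl₁ : cs.wordProd l₁ = a * cs.simple i := by
                have h := hproda
                rw [cs.wordProd_append, cs.wordProd_singleton] at h
                rw [← h, cs.simple_mul_simple_cancel_right]
              have h1 : cs.length (a * cs.simple i) ≤ l₁.length := by
                rw [← hπl₁]
                exact cs.length_wordProd_le l₁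
              have hℓa : cs.length a = l₁.length + 1 := by
                have h := hreda
                rw [CoxeterSystem.IsReduced, hproda, List.length_append] at h
                simpa using h
              omega
        · rw [one_mul] at hc
          subst hc
          exact ihc ha
    rcases List.sublist_append_iff.mp hsub with ⟨l₁, l₂, rfl, hl₁, hl₂⟩
    rcases List.sublist_singleton.mp hl₂ with rfl | rfl
    · rw [List.append_nil]
      exact (ihn ω₀.length hlen₀ ω₀ le_rfl hred₀ l₁ hl₁).trans hup
    · have hπ' : cs.wordProd (l₁ ++ [i]) = cs.wordProd l₁ * cs.simple i := by
        rw [cs.wordProd_append, cs.wordProd_singleton]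
      have ha_lt : cs.length (cs.wordProd l₁) < cs.length (cs.wordProd l₁ * cs.simple i) := by
        have hredl : cs.length (cs.wordProd (l₁ ++ [i])) = l₁.length + 1 := by
          have := hred''
          rw [CoxeterSystem.IsReduced] at this
          rw [this, List.length_append]
          simp
        rw [hπ'] at hredl
        have h1 : cs.length (cs.wordProd l₁) ≤ l₁.length := cs.length_wordProd_le l₁
        omega
      have hZa := Z (cs.wordProd l₁) (ihn ω₀.length hlen₀ ω₀ le_rfl hred₀ l₁ hl₁) ha_lt
      rw [hπ', hπω]
      exact hZa

end BruhatBasic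


section Lifting

open List Relation

lemma subword_brLe' {ω ω' : List B} (hred : cs.IsReduced ω) (hsub : ω'.Sublist ω) :
    BrLe cs (cs.wordProd ω') (cs.wordProd ω) :=
  subword_brLe cs ω.length ω le_rfl hred ω' hsub

/-- Lifting property, both descents. -/
lemma lp2 (i : B) {u w : W} (hu : cs.length (u * cs.simple i) < cs.length u)
    (hw : cs.length (w * cs.simple i) < cs.length w) (h : BrLe cs u w) :
    BrLe cs (u * cs.simple i) (w * cs.simple i) := by
  obtain ⟨ω₂, hr₂, hp₂⟩ := cs.exists_reduced_word' (w * cs.simple i)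
  have hπw : cs.wordProd (ω₂ ++ [i]) = w := by
    rw [cs.wordProd_append, cs.wordProd_singleton, ← hp₂, cs.simple_mul_simple_cancel_right]
  have hw1 : cs.length (w * cs.simple i) + 1 = cs.length w := by
    rcases cs.length_mul_simple w i with hh | hh <;> omega
  have hred_ω : cs.IsReduced (ω₂ ++ [i]) := by
    rw [CoxeterSystem.IsReduced, hπw, List.length_append, List.length_singleton]
    have : ω₂.length = cs.length (w * cs.simple i) := by
      have := hr₂
      rw [CoxeterSystem.IsReduced, ← hp₂] at this
      omega
    omega
  obtain ⟨ωu, hsu, hru, hpu⟩ := brLe_subword cs h _ hred_ω hπw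
  rcases List.sublist_append_iff.mp hsu with ⟨l₁, l₂, rfl, hl₁, hl₂⟩
  rcases List.sublist_singleton.mp hl₂ with rfl | rfl
  · rw [List.append_nil] at hpu
    have h1 : BrLe cs u (w * cs.simple i) := by
      have := subword_brLe' cs hr₂ hl₁
      rwa [hpu, ← hp₂] at this
    exact (brLe_mul_simple_right_down cs hu.le).trans h1
  · have hπl₁ : cs.wordProd l₁ = u * cs.simple i := by
      have h := hpu
      rw [cs.wordProd_append, cs.wordProd_singleton] at h
      rw [← h, cs.simple_mul_simple_cancel_right]
    have := subword_brLe' cs hr₂ hl₁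
    rwa [hπl₁, ← hp₂] at this

/-- Lifting property, descent of `w`, ascent of `u`. -/
lemma lp3 (i : B) {u w : W} (hu : cs.length u < cs.length (u * cs.simple i))
    (hw : cs.length (w * cs.simple i) < cs.length w) (h : BrLe cs u w) :
    BrLe cs u (w * cs.simple i) := by
  obtain ⟨ω₂, hr₂, hp₂⟩ := cs.exists_reduced_word' (w * cs.simple i)
  have hπw : cs.wordProd (ω₂ ++ [i]) = w := by
    rw [cs.wordProd_append, cs.wordProd_singleton, ← hp₂, cs.simple_mul_simple_cancel_right]
  have hw1 : cs.length (w * cs.simple i) + 1 = cs.length w := by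
    rcases cs.length_mul_simple w i with hh | hh <;> omega
  have hred_ω : cs.IsReduced (ω₂ ++ [i]) := by
    rw [CoxeterSystem.IsReduced, hπw, List.length_append, List.length_singleton]
    have : ω₂.length = cs.length (w * cs.simple i) := by
      have := hr₂
      rw [CoxeterSystem.IsReduced, ← hp₂] at this
      omega
    omega
  obtain ⟨ωu, hsu, hru, hpu⟩ := brLe_subword cs h _ hred_ω hπw
  rcases List.sublist_append_iff.mp hsu with ⟨l₁, l₂, rfl, hl₁, hl₂⟩
  rcases List.sublist_singleton.mp hl₂ with rfl | rfl
  · rw [List.append_nil] at hpu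
    have := subword_brLe' cs hr₂ hl₁
    rwa [hpu, ← hp₂] at this
  · exfalso
    have hπl₁ : cs.wordProd l₁ = u * cs.simple i := by
      have h := hpu
      rw [cs.wordProd_append, cs.wordProd_singleton] at h
      rw [← h, cs.simple_mul_simple_cancel_right]
    have h1 : cs.length (u * cs.simple i) ≤ l₁.length := by
      rw [← hπl₁]
      exact cs.length_wordProd_le l₁
    have hℓu : cs.length u = l₁.length + 1 := by
      have h := hru
      rw [CoxeterSystem.IsReduced, hpu, List.length_append] at h
      simpa using h
    omega

/-- Lifting property "Z": both ascents. -/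
lemma zlem (i : B) {u w : W} (hu : cs.length u < cs.length (u * cs.simple i))
    (hw : cs.length w < cs.length (w * cs.simple i)) (h : BrLe cs u w) :
    BrLe cs (u * cs.simple i) (w * cs.simple i) := by
  obtain ⟨ωw, hrw, hpw⟩ := cs.exists_reduced_word' w
  have hw1 : cs.length (w * cs.simple i) = cs.length w + 1 := by
    rcases cs.length_mul_simple w i with hh | hh <;> omega
  have hred_wi : cs.IsReduced (ωw ++ [i]) := by
    rw [CoxeterSystem.IsReduced, cs.wordProd_append, cs.wordProd_singleton, ← hpw,
      List.length_append, List.length_singleton, hw1]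
    have : cs.length w = ωw.length := by
      have := hrw
      rw [CoxeterSystem.IsReduced, ← hpw] at this
      exact this
    omega
  obtain ⟨ωu, hsu, hru, hpu⟩ := brLe_subword cs h ωw hrw hpw.symm
  have := subword_brLe' cs hred_wi (hsu.append (List.Sublist.refl [i]))
  rwa [cs.wordProd_append, cs.wordProd_append, cs.wordProd_singleton,
    hpu, ← hpw] at this

end Lifting

section Main13

open List Relation

private lemma stmt13_base (s : B) (x y v w : W) (hw0 : cs.length w = 0)
    (h1 : x * y = v * w)
    (h3 : cs.length x + cs.length y = cs.length v + cs.length w)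
    (h5 : cs.length v < cs.length (v * cs.simple s))
    (h6 : BrLe cs y (cs.simple s * w)) : BrLe cs y w := by
  have hw1 : w = 1 := cs.length_eq_zero_iff.mp hw0
  subst hw1
  rw [mul_one] at h6 h1
  have hly : cs.length y ≤ cs.length (cs.simple s) := brLe_length_le cs h6
  rw [cs.length_simple] at hly
  by_cases hy0 : cs.length y = 0
  · have hy1 : y = 1 := cs.length_eq_zero_iff.mp hy0
    rw [hy1]
    exact Relation.ReflTransGen.refl
  · exfalso
    have hyeq : y = cs.simple s :=
      brLe_eq_of_length_eq cs h6 (by rw [cs.length_simple]; omega)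
    subst hyeq
    have h5' : v * cs.simple s = x := by
      rw [← h1, cs.simple_mul_simple_cancel_right]
    rw [h5'] at h5
    rw [cs.length_one, cs.length_simple] at h3
    omega

private lemma stmt13_main (s : B) : ∀ (n : ℕ) (x y v w : W), cs.length w ≤ n →
    x * y = v * w →
    cs.length (x * y) = cs.length x + cs.length y →
    cs.length x + cs.length y = cs.length v + cs.length w →
    cs.length w < cs.length (cs.simple s * w) →
    cs.length v < cs.length (v * cs.simple s) →
    BrLe cs y (cs.simple s * w) →
    BrLe cs y w := by
  intro n
  induction n using Nat.strong_induction_on with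
  | _ n ih =>
  intro x y v w hwn h1 h2 h3 h4 h5 h6
  by_cases hw0 : cs.length w = 0
  · exact stmt13_base cs s x y v w hw0 h1 h3 h5 h6
  · have hwne : w ≠ 1 := fun hh => hw0 (by rw [hh, cs.length_one])
    obtain ⟨i, hdesc⟩ := cs.exists_rightDescent_of_ne_one hwne
    have hdesc' : cs.length (w * cs.simple i) < cs.length w := hdesc
    have hwt : cs.length (w * cs.simple i) + 1 = cs.length w := by
      rcases cs.length_mul_simple w i with hh | hh <;> omega
    have hsw : cs.length (cs.simple s * w) = cs.length w + 1 := by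
      rcases cs.length_simple_mul w s with hh | hh <;> omega
    have hswt : cs.length (cs.simple s * w * cs.simple i) = cs.length w := by
      have ha1 := cs.length_mul_simple (cs.simple s * w) i
      have ha2 := cs.length_simple_mul (w * cs.simple i) s
      rw [← mul_assoc] at ha2
      omega
    have hswt_desc : cs.length (cs.simple s * w * cs.simple i)
        < cs.length (cs.simple s * w) := by omega
    by_cases hyt : cs.length (y * cs.simple i) < cs.length y
    · -- Case A
      have hyt1 : cs.length (y * cs.simple i) + 1 = cs.length y := by
        rcases cs.length_mul_simple y i with hh | hh <;> omega
      have h6A : BrLe cs (y * cs.simple i) (cs.simple s * w * cs.simple i) :=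
        lp2 cs i hyt hswt_desc h6
      have hassoc : x * (y * cs.simple i) = x * y * cs.simple i := by rw [mul_assoc]
      have h2' : cs.length (x * (y * cs.simple i))
          = cs.length x + cs.length (y * cs.simple i) := by
        have hA := cs.length_mul_le x (y * cs.simple i)
        rw [hassoc] at hA
        have hB := cs.length_mul_simple (x * y) i
        rw [hassoc]
        omega
      have h1' : x * (y * cs.simple i) = v * (w * cs.simple i) := by
        rw [hassoc, h1, mul_assoc]
      have h3' : cs.length x + cs.length (y * cs.simple i)
          = cs.length v + cs.length (w * cs.simple i) := by omega
      have h4' : cs.length (w * cs.simple i)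
          < cs.length (cs.simple s * (w * cs.simple i)) := by
        rw [← mul_assoc]
        omega
      have h6' : BrLe cs (y * cs.simple i) (cs.simple s * (w * cs.simple i)) := by
        rw [← mul_assoc]
        exact h6A
      have hIH := ih (cs.length (w * cs.simple i)) (by omega) x (y * cs.simple i) v
        (w * cs.simple i) le_rfl h1' h2' h3' h4' h5 h6'
      have hZ := zlem cs i (u := y * cs.simple i) (w := w * cs.simple i)
        (by rw [cs.simple_mul_simple_cancel_right]; omega)
        (by rw [cs.simple_mul_simple_cancel_right]; omega) hIH
      rwa [cs.simple_mul_simple_cancel_right, cs.simple_mul_simple_cancel_right] at hZ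
    · -- Case B
      have hyt' : cs.length y < cs.length (y * cs.simple i) := by
        have := cs.length_mul_simple_ne y i
        omega
      have h6B : BrLe cs y (cs.simple s * (w * cs.simple i)) := by
        rw [← mul_assoc]
        exact lp3 cs i hyt' hswt_desc h6
      obtain ⟨ωx, hrx, hpx⟩ := cs.exists_reduced_word' x
      obtain ⟨ωy, hry, hpy⟩ := cs.exists_reduced_word' y
      have hlx : cs.length x = ωx.length := by
        have := hrx; rw [CoxeterSystem.IsReduced, ← hpx] at this; exact this
      have hly : cs.length y = ωy.length := by
        have := hry; rw [CoxeterSystem.IsReduced, ← hpy] at this; exact this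
      have hπxy : cs.wordProd (ωx ++ ωy) = x * y := by
        rw [cs.wordProd_append, ← hpx, ← hpy]
      have hrxy : cs.IsReduced (ωx ++ ωy) := by
        rw [CoxeterSystem.IsReduced, hπxy, List.length_append]
        omega
      have hxyt_lt : cs.length (x * y * cs.simple i) < cs.length (x * y) := by
        have hA := cs.length_mul_le v (w * cs.simple i)
        have hB : x * y * cs.simple i = v * (w * cs.simple i) := by rw [h1, mul_assoc]
        rw [hB]
        omega
      have hxyt1 : cs.length (x * y * cs.simple i) + 1 = cs.length (x * y) := by
        rcases cs.length_mul_simple (x * y) i with hh | hh <;> omega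
      obtain ⟨j, hj, hdel⟩ := se_right_del cs (cs.isReflection_simple i) hxyt_lt hrxy hπxy
      rw [List.length_append] at hj
      by_cases hjx : j < ωx.length
      · -- deletion happens in the x part
        have herase : (ωx ++ ωy).eraseIdx j = ωx.eraseIdx j ++ ωy :=
          List.eraseIdx_append_of_lt_length hjx ωy
        rw [herase, cs.wordProd_append, ← hpy] at hdel
        have hlx' : cs.length (cs.wordProd (ωx.eraseIdx j)) + 1 ≤ ωx.length := by
          have h := cs.length_wordProd_le (ωx.eraseIdx j)
          rw [List.length_eraseIdx, if_pos hjx] at h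
          omega
        have h2' : cs.length (cs.wordProd (ωx.eraseIdx j) * y)
            = cs.length (cs.wordProd (ωx.eraseIdx j)) + cs.length y := by
          have hA := cs.length_mul_le (cs.wordProd (ωx.eraseIdx j)) y
          rw [hdel]
          rw [hdel] at hA
          omega
        have h1' : cs.wordProd (ωx.eraseIdx j) * y = v * (w * cs.simple i) := by
          rw [hdel, h1, mul_assoc]
        have h3' : cs.length (cs.wordProd (ωx.eraseIdx j)) + cs.length y
            = cs.length v + cs.length (w * cs.simple i) := by
          have hC : cs.length (cs.wordProd (ωx.eraseIdx j) * y)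
              = cs.length (x * y * cs.simple i) := by rw [hdel]
          omega
        have h4' : cs.length (w * cs.simple i)
            < cs.length (cs.simple s * (w * cs.simple i)) := by
          rw [← mul_assoc]
          omega
        have hIH := ih (cs.length (w * cs.simple i)) (by omega) (cs.wordProd (ωx.eraseIdx j))
          y v (w * cs.simple i) le_rfl h1' h2' h3' h4' h5 h6B
        exact hIH.trans (brLe_mul_simple_right_down cs hdesc'.le)
      · -- deletion happens in the y part: contradiction
        exfalso
        push_neg at hjx
        have herase : (ωx ++ ωy).eraseIdx j = ωx ++ ωy.eraseIdx (j - ωx.length) :=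
          List.eraseIdx_append_of_length_le hjx ωy
        rw [herase, cs.wordProd_append, ← hpx] at hdel
        have hyt_eq : cs.wordProd (ωy.eraseIdx (j - ωx.length)) = y * cs.simple i := by
          have h := hdel
          rw [mul_assoc] at h
          exact mul_left_cancel h
        have hjy : j - ωx.length < ωy.length := by omega
        have hlen' : cs.length (y * cs.simple i) + 1 ≤ ωy.length := by
          have h := cs.length_wordProd_le (ωy.eraseIdx (j - ωx.length))
          rw [List.length_eraseIdx, if_pos hjy, hyt_eq] at h
          omega
        omega

end Main13


/-- the technical Bruhat order lemma. -/
theorem stmt13 (s : B) (x y v w : W)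
    (h1 : x * y = v * w)
    (h2 : cs.length (x * y) = cs.length x + cs.length y)
    (h3 : cs.length x + cs.length y = cs.length v + cs.length w)
    (h4 : cs.length w < cs.length (cs.simple s * w))
    (h5 : cs.length v < cs.length (v * cs.simple s))
    (h6 : BrLe cs y (cs.simple s * w)) :
    BrLe cs y w :=
  stmt13_main cs s (cs.length w) x y v w le_rfl h1 h2 h3 h4 h5 h6

end WGI
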